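/- Let A = (a_ij) be the adjacency matrix of an undirected connected graph on N ≥ 2 nodes (a_ij ∈ {0,1}, a_ii = 0, a_ij = a_ji), let L = D − A be its Laplacian with D = diag(Σ_j a_1j,…,Σ_j a_Nj), and let B₀ be the N²×N² diagonal matrix whose diagonal entries are a_11, a_12,…, a_1N, a_21,…, a_NN in this order. Then the matrix L ⊗ I_N + B₀ (Kronecker product with the N×N identity) is symmetric positive definite; equivalently, −(L ⊗ I_N + B₀) is Hurwitz. -/

import Mathlib

open scoped BigOperators Classical
open Kronecker
open Matrix

private lemma re_dot_aux {n : Type*} [Fintype n] (M : Matrix n n ℝ) (v : n → ℂ) :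
    (star v ⬝ᵥ (M.map (algebraMap ℝ ℂ)) *ᵥ v).re
      = (fun p => (v p).re) ⬝ᵥ M *ᵥ (fun p => (v p).re)
        + (fun p => (v p).im) ⬝ᵥ M *ᵥ (fun p => (v p).im) := by
  classical
  simp only [dotProduct, Matrix.mulVec, Matrix.map_apply, Pi.star_apply,
    Finset.mul_sum, Complex.re_sum, ← Finset.sum_add_distrib]
  refine Finset.sum_congr rfl fun p _ => ?_
  refine Finset.sum_congr rfl fun q _ => ?_
  simp [Complex.mul_re, Complex.mul_im, RCLike.star_def]

private lemma hurwitz_of_posDef {n : Type*} [Fintype n] [DecidableEq n] (M : Matrix n n ℝ)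
    (hM : M.PosDef) :
    ∀ μ ∈ spectrum ℂ ((-M).map (algebraMap ℝ ℂ)), μ.re < 0 := by
  intro μ hμ
  have hmap : (-M).map (algebraMap ℝ ℂ) = -(M.map (algebraMap ℝ ℂ)) := by
    ext i j; simp [Matrix.map_apply]
  set Mc := M.map (algebraMap ℝ ℂ) with hMc
  rw [hmap, ← AlgEquiv.spectrum_eq (Matrix.toLinAlgEquiv' : Matrix (n) n ℂ ≃ₐ[ℂ] _),
    ← Module.End.hasEigenvalue_iff_mem_spectrum] at hμ
  obtain ⟨v, hv⟩ := hμ.exists_hasEigenvector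
  have hv0 : v ≠ 0 := hv.right
  have heq : (-Mc) *ᵥ v = μ • v := by
    have h := hv.apply_eq_smul
    rwa [Matrix.toLinAlgEquiv'_apply] at h
  set a : n → ℝ := fun p => (v p).re with ha
  set b : n → ℝ := fun p => (v p).im with hb
  have hdot : star v ⬝ᵥ ((-Mc) *ᵥ v) = μ * (star v ⬝ᵥ v) := by
    rw [heq, dotProduct_smul, smul_eq_mul]
  have hSim : (star v ⬝ᵥ v).im = 0 := by
    simp only [dotProduct, Pi.star_apply, Complex.im_sum]
    refine Finset.sum_eq_zero fun p _ => ?_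
    simp [Complex.mul_im, RCLike.star_def]; ring
  have hSre : (star v ⬝ᵥ v).re = a ⬝ᵥ a + b ⬝ᵥ b := by
    simp only [dotProduct, Pi.star_apply, Complex.re_sum, ← Finset.sum_add_distrib]
    refine Finset.sum_congr rfl fun p _ => ?_
    simp [Complex.mul_re, RCLike.star_def, ha, hb]
  have hLre : (star v ⬝ᵥ ((-Mc) *ᵥ v)).re = -(a ⬝ᵥ M *ᵥ a + b ⬝ᵥ M *ᵥ b) := by
    rw [Matrix.neg_mulVec, dotProduct_neg, Complex.neg_re, hMc, re_dot_aux]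
  have hab : a ≠ 0 ∨ b ≠ 0 := by
    by_contra h
    push_neg at h
    apply hv0
    ext p
    have h1 := congrFun h.1 p
    have h2 := congrFun h.2 p
    exact Complex.ext h1 h2
  have hQ : 0 < a ⬝ᵥ M *ᵥ a + b ⬝ᵥ M *ᵥ b := by
    rcases hab with h | h
    · have := hM.dotProduct_mulVec_pos (x := a) (by simpa using h)
      have h2 := hM.posSemidef.dotProduct_mulVec_nonneg b
      simp only [star_trivial] at this h2
      linarith
    · have := hM.dotProduct_mulVec_pos (x := b) (by simpa using h)
      have h2 := hM.posSemidef.dotProduct_mulVec_nonneg a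
      simp only [star_trivial] at this h2
      linarith
  have hS : 0 < a ⬝ᵥ a + b ⬝ᵥ b := by
    have hnn : ∀ c : n → ℝ, 0 ≤ c ⬝ᵥ c := fun c => Finset.sum_nonneg fun q _ => mul_self_nonneg _
    have key : ∀ c : n → ℝ, c ≠ 0 → 0 < c ⬝ᵥ c := by
      intro c hc
      rcases Function.ne_iff.mp hc with ⟨p, hp⟩
      have hp' : c p ≠ 0 := by simpa using hp
      exact (mul_self_pos.mpr hp').trans_le
        (Finset.single_le_sum (f := fun q => c q * c q)
          (fun q _ => mul_self_nonneg _) (Finset.mem_univ p))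
    rcases hab with h | h
    · linarith [key a h, hnn b]
    · linarith [key b h, hnn a]
  have hre : μ.re * ((star v ⬝ᵥ v).re) = -(a ⬝ᵥ M *ᵥ a + b ⬝ᵥ M *ᵥ b) := by
    have := congrArg Complex.re hdot
    rw [hLre, Complex.mul_re, hSim] at this
    linarith [this]
  rw [hSre] at hre
  nlinarith [hQ, hS, hre]

private lemma kron_quad {N : ℕ} (L : Matrix (Fin N) (Fin N) ℝ) (x : Fin N × Fin N → ℝ) :
    x ⬝ᵥ (L ⊗ₖ (1 : Matrix (Fin N) (Fin N) ℝ)) *ᵥ x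
      = ∑ k, (fun i => x (i, k)) ⬝ᵥ L *ᵥ (fun i => x (i, k)) := by
  classical
  simp only [dotProduct, Matrix.mulVec, Matrix.kroneckerMap_apply, Matrix.one_apply,
    Fintype.sum_prod_type, mul_ite, mul_one, mul_zero, ite_mul, zero_mul,
    Finset.sum_ite_eq, Finset.mem_univ, if_true]
  exact Finset.sum_comm

theorem statement6 {N : ℕ} (hN : 2 ≤ N)
    (A : Fin N → Fin N → ℝ) (G : SimpleGraph (Fin N))
    (hA : ∀ i j, A i j = if G.Adj i j then (1 : ℝ) else 0)
    (hG : G.Connected)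
    (L : Matrix (Fin N) (Fin N) ℝ)
    (hL : L = Matrix.diagonal (fun i => ∑ j, A i j) - Matrix.of A)
    (B0 : Matrix (Fin N × Fin N) (Fin N × Fin N) ℝ)
    (hB0 : B0 = Matrix.diagonal fun p => A p.1 p.2) :
    (L ⊗ₖ (1 : Matrix (Fin N) (Fin N) ℝ) + B0).PosDef ∧
    (∀ μ ∈ spectrum ℂ
      ((-(L ⊗ₖ (1 : Matrix (Fin N) (Fin N) ℝ) + B0)).map (algebraMap ℝ ℂ)), μ.re < 0) := by
  classical
  -- identify L with the graph Laplacian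
  have hAdj : Matrix.of A = G.adjMatrix ℝ := by
    ext i j
    simp [hA, SimpleGraph.adjMatrix]
  have hdeg : (fun i => ∑ j, A i j) = fun i => ((G.degree i : ℝ)) := by
    funext i
    simp only [hA]
    rw [Finset.sum_boole]
    congr 1
    rw [SimpleGraph.degree, SimpleGraph.neighborFinset_eq_filter]
  have hLlap : L = G.lapMatrix ℝ := by
    rw [hL, SimpleGraph.lapMatrix, SimpleGraph.degMatrix, hAdj, hdeg]
  have hLsym : L.IsHermitian := by
    rw [hLlap]
    exact (SimpleGraph.posSemidef_lapMatrix ℝ G).1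
  have hLpsd : L.PosSemidef := by
    rw [hLlap]; exact SimpleGraph.posSemidef_lapMatrix ℝ G
  have hA01 : ∀ i j, 0 ≤ A i j := by
    intro i j; rw [hA]; positivity
  -- Hermitian part
  have hherm : (L ⊗ₖ (1 : Matrix (Fin N) (Fin N) ℝ) + B0).IsHermitian := by
    rw [Matrix.IsHermitian, Matrix.conjTranspose_eq_transpose_of_trivial,
      Matrix.transpose_add, hB0, Matrix.diagonal_transpose,
      ← Matrix.kroneckerMap_transpose, Matrix.transpose_one]
    have hLt : Lᵀ = L := by
      simpa [Matrix.IsHermitian, Matrix.conjTranspose_eq_transpose_of_trivial] using hLsym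
    rw [hLt]
  -- quadratic form positivity
  have hpos : ∀ x : Fin N × Fin N → ℝ, x ≠ 0 →
      0 < x ⬝ᵥ (L ⊗ₖ (1 : Matrix (Fin N) (Fin N) ℝ) + B0) *ᵥ x := by
    intro x hx
    have hsplit : x ⬝ᵥ (L ⊗ₖ (1 : Matrix (Fin N) (Fin N) ℝ) + B0) *ᵥ x
        = (∑ k, (fun i => x (i, k)) ⬝ᵥ L *ᵥ (fun i => x (i, k)))
          + ∑ p : Fin N × Fin N, A p.1 p.2 * (x p * x p) := by
      rw [Matrix.add_mulVec, dotProduct_add, kron_quad]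
      congr 1
      rw [hB0]
      simp only [dotProduct, Matrix.mulVec_diagonal]
      exact Finset.sum_congr rfl fun p _ => by ring
    have h1 : ∀ k, 0 ≤ (fun i => x (i, k)) ⬝ᵥ L *ᵥ (fun i => x (i, k)) := by
      intro k
      simpa using hLpsd.dotProduct_mulVec_nonneg (fun i => x (i, k))
    have h2 : ∀ p : Fin N × Fin N, 0 ≤ A p.1 p.2 * (x p * x p) :=
      fun p => mul_nonneg (hA01 _ _) (mul_self_nonneg _)
    have hS1 : 0 ≤ ∑ k, (fun i => x (i, k)) ⬝ᵥ L *ᵥ (fun i => x (i, k)) :=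
      Finset.sum_nonneg fun k _ => h1 k
    have hS2 : 0 ≤ ∑ p : Fin N × Fin N, A p.1 p.2 * (x p * x p) :=
      Finset.sum_nonneg fun p _ => h2 p
    have hne : x ⬝ᵥ (L ⊗ₖ (1 : Matrix (Fin N) (Fin N) ℝ) + B0) *ᵥ x ≠ 0 := by
      intro h0
      rw [hsplit] at h0
      have hz1 : ∑ k, (fun i => x (i, k)) ⬝ᵥ L *ᵥ (fun i => x (i, k)) = 0 := by linarith
      have hz2 : ∑ p : Fin N × Fin N, A p.1 p.2 * (x p * x p) = 0 := by linarith
      have hterm1 : ∀ k, (fun i => x (i, k)) ⬝ᵥ L *ᵥ (fun i => x (i, k)) = 0 :=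
        fun k => (Finset.sum_eq_zero_iff_of_nonneg fun k _ => h1 k).mp hz1 k (Finset.mem_univ k)
      have hterm2 : ∀ p : Fin N × Fin N, A p.1 p.2 * (x p * x p) = 0 :=
        fun p => (Finset.sum_eq_zero_iff_of_nonneg fun p _ => h2 p).mp hz2 p (Finset.mem_univ p)
      -- each column is constant
      have hconst : ∀ k i j, x (i, k) = x (j, k) := by
        intro k i j
        have hmv : L *ᵥ (fun i => x (i, k)) = 0 := by
          rw [← hLpsd.dotProduct_mulVec_zero_iff]
          simpa using hterm1 k
        have := (SimpleGraph.lapMatrix_mulVec_eq_zero_iff_forall_reachable G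
          (x := fun i => x (i, k))).mp (by rw [← hLlap]; exact hmv)
        exact this i j (hG.preconnected i j)
      -- every column vanishes
      apply hx
      funext p
      obtain ⟨i, k⟩ := p
      -- find a neighbor of k
      have : Nontrivial (Fin N) := Fin.nontrivial_iff_two_le.mpr hN
      obtain ⟨j, hj⟩ := exists_ne k
      obtain ⟨w⟩ := hG.preconnected k j
      have hnb : ∃ c, G.Adj c k := by
        cases w with
        | nil => exact absurd rfl (Ne.symm hj)
        | cons h p => exact ⟨_, h.symm⟩
      obtain ⟨c, hc⟩ := hnb
      have hAck : A c k = 1 := by rw [hA]; simp [hc]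
      have hxck : x (c, k) = 0 := by
        have := hterm2 (c, k)
        rw [hAck, one_mul] at this
        exact mul_self_eq_zero.mp this
      have := hconst k i c
      simp only [Pi.zero_apply]
      rw [this, hxck]
    have hnonneg : 0 ≤ x ⬝ᵥ (L ⊗ₖ (1 : Matrix (Fin N) (Fin N) ℝ) + B0) *ᵥ x := by
      rw [hsplit]; linarith
    exact lt_of_le_of_ne hnonneg (Ne.symm hne)
  have hposdef : (L ⊗ₖ (1 : Matrix (Fin N) (Fin N) ℝ) + B0).PosDef :=
    Matrix.PosDef.of_dotProduct_mulVec_pos hherm fun x hx => by simpa using hpos x hx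
  exact ⟨hposdef, hurwitz_of_posDef _ hposdef⟩
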